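/- arXiv:1302.0449 — 5 statements merged into one kernel-verified Lean document; each statement's English description precedes it below -/
import Mathlib

section
/- Let A and Q be symmetric n×n real matrices with A𝟙 = Q𝟙 = 0, and suppose A is negative definite when restricted to the subspace 𝟙⊥. If P is a symmetric solution of AᵀP + PA = -Q, then 𝟙 is an eigenvector of P. -/
open Matrix

/-- If `A, Q` are symmetric, `A𝟙 = Q𝟙 = 0`, `A` is negative definite on `𝟙⊥`,
and `P` is a symmetric solution of `AᵀP + PA = -Q`, then `𝟙` is an eigenvector of `P`. -/
theorem ones_eigenvector_of_lyap {n : ℕ} (hn : 0 < n)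
    (A Q P : Matrix (Fin n) (Fin n) ℝ)
    (hA : A.IsSymm) (hQ : Q.IsSymm)
    (hA1 : A.mulVec (fun _ => (1:ℝ)) = 0)
    (hQ1 : Q.mulVec (fun _ => (1:ℝ)) = 0)
    (hAneg : ∀ x : Fin n → ℝ, dotProduct x (fun _ => (1:ℝ)) = 0 → x ≠ 0 →
      dotProduct x (A.mulVec x) < 0)
    (hP : P.IsSymm) (hlyap : Aᵀ * P + P * A = -Q) :
    ∃ μ : ℝ, P.mulVec (fun _ => (1:ℝ)) = μ • (fun _ => (1:ℝ)) := by
  set one : Fin n → ℝ := (fun _ => (1:ℝ)) with hone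
  set v : Fin n → ℝ := P.mulVec one with hv
  -- A v = 0
  have hAv : A.mulVec v = 0 := by
    have h := congrArg (fun M => M.mulVec one) hlyap
    simp only [add_mulVec, neg_mulVec, mulVec_mulVec] at h
    rw [← mulVec_mulVec, ← mulVec_mulVec, hA1, hQ1] at h
    have h2 : Aᵀ.mulVec v = 0 := by
      simpa [← hv, mulVec_zero] using h
    rwa [hA.eq] at h2
  set c : ℝ := (dotProduct one v) / n with hc
  set w : Fin n → ℝ := v - c • one with hw
  have hw1 : dotProduct w one = 0 := by
    have hdot : dotProduct one one = (n : ℝ) := by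
      simp [hone, dotProduct]
    have hsym : dotProduct w one = dotProduct v one - c * (n : ℝ) := by
      simp [hw, sub_dotProduct, smul_dotProduct, hdot, smul_eq_mul]
    rw [hsym]
    have hvo : dotProduct v one = dotProduct one v := dotProduct_comm v one
    rw [hvo, hc]
    field_simp
    simp
  have hAw : A.mulVec w = 0 := by
    rw [hw, mulVec_sub, hAv, mulVec_smul, hA1]
    simp
  have hwz : w = 0 := by
    by_contra hne
    have := hAneg w hw1 hne
    rw [hAw] at this
    simp at this
  refine ⟨c, ?_⟩
  have : v = c • one := by
    have := sub_eq_zero.mp hwz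
    exact this
  simpa [hv, hone] using this
end

section
/- Let A and Q be symmetric n×n real matrices with A𝟙 = Q𝟙 = 0 and A negative definite on 𝟙⊥, and Q positive semidefinite on 𝟙⊥. Among all positive semidefinite symmetric solutions P of AᵀP + PA = -Q, the one with minimal trace satisfies P𝟙 = 0. -/
open Matrix

/-- Among all positive semidefinite symmetric solutions `P` of `AᵀP + PA = -Q`,
the one with minimal trace satisfies `P𝟙 = 0`. -/
theorem min_trace_lyap_solution_kills_ones {n : ℕ}
    (A Q P : Matrix (Fin n) (Fin n) ℝ)
    (hA : A.IsSymm) (hQ : Q.IsSymm)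
    (hA1 : A.mulVec (fun _ => (1:ℝ)) = 0)
    (hQ1 : Q.mulVec (fun _ => (1:ℝ)) = 0)
    (hAneg : ∀ x : Fin n → ℝ, dotProduct x (fun _ => (1:ℝ)) = 0 → x ≠ 0 →
      dotProduct x (A.mulVec x) < 0)
    (hQpsd : ∀ x : Fin n → ℝ, dotProduct x (fun _ => (1:ℝ)) = 0 →
      0 ≤ dotProduct x (Q.mulVec x))
    (hPpsd : P.PosSemidef) (hlyap : Aᵀ * P + P * A = -Q)
    (hmin : ∀ P' : Matrix (Fin n) (Fin n) ℝ, P'.PosSemidef →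
      Aᵀ * P' + P' * A = -Q → P.trace ≤ P'.trace) :
    P.mulVec (fun _ => (1:ℝ)) = 0 := by
  rcases Nat.eq_zero_or_pos n with hn | hn
  · subst hn; funext i; exact i.elim0
  set u : Fin n → ℝ := fun _ => (1:ℝ) with hu
  -- It suffices that uᵀ P u = 0
  suffices hs : dotProduct u (P.mulVec u) = 0 by
    have := (hPpsd.dotProduct_mulVec_zero_iff u).mp (by simpa using hs)
    simpa using this
  -- general matrix * vecMulVec lemmas
  have mul_vmv : ∀ B : Matrix (Fin n) (Fin n) ℝ,
      B * vecMulVec u u = vecMulVec (B.mulVec u) u := by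
    intro B; ext i j
    simp only [mul_apply, vecMulVec_apply, mulVec, dotProduct, Finset.sum_mul]
    exact Finset.sum_congr rfl fun k _ => by ring
  have vmv_mul : ∀ B : Matrix (Fin n) (Fin n) ℝ,
      vecMulVec u u * B = vecMulVec u (Bᵀ.mulVec u) := by
    intro B; ext i j
    simp only [mul_apply, vecMulVec_apply, mulVec, dotProduct, transpose_apply, Finset.mul_sum]
    exact Finset.sum_congr rfl fun k _ => by ring
  set J : Matrix (Fin n) (Fin n) ℝ := vecMulVec u u with hJ
  have hAJ : A * J = 0 := by
    rw [hJ, mul_vmv, hA1]; ext i j; simp [vecMulVec_apply]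
  have hJA : J * A = 0 := by
    rw [hJ, vmv_mul, hA.eq, hA1]; ext i j; simp [vecMulVec_apply]
  have hQJ : Q * J = 0 := by
    rw [hJ, mul_vmv, hQ1]; ext i j; simp [vecMulVec_apply]
  have hJQ : J * Q = 0 := by
    rw [hJ, vmv_mul, hQ.eq, hQ1]; ext i j; simp [vecMulVec_apply]
  -- replace Aᵀ by A
  rw [hA.eq] at hlyap
  have hmin' := hmin
  set c : ℝ := (n:ℝ)⁻¹ with hc
  set M : Matrix (Fin n) (Fin n) ℝ := 1 - c • J with hM
  have hJsymm : Jᵀ = J := by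
    rw [hJ]; ext i j; simp [vecMulVec_apply]; exact mul_comm _ _
  have hMsymm : Mᵀ = M := by
    rw [hM, transpose_sub, transpose_smul, transpose_one, hJsymm]
  set P' : Matrix (Fin n) (Fin n) ℝ := M * P * M with hP'
  have hP'psd : P'.PosSemidef := by
    have := hPpsd.mul_mul_conjTranspose_same M
    simpa [hP', conjTranspose_eq_transpose_of_trivial, hMsymm] using this
  -- P' satisfies the Lyapunov equation
  have hAPJ : A * P * J = 0 := by
    have h1 : (A * P + P * A) * J = -Q * J := by rw [hlyap]
    have h2 : P * A * J = 0 := by rw [Matrix.mul_assoc, hAJ, Matrix.mul_zero]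
    have h3 : -Q * J = 0 := by rw [Matrix.neg_mul, hQJ, neg_zero]
    rw [Matrix.add_mul, h2, add_zero, h3] at h1
    exact h1
  have hJPA : J * P * A = 0 := by
    have h1 : J * (A * P + P * A) = J * -Q := by rw [hlyap]
    have h2 : J * (A * P) = 0 := by rw [← Matrix.mul_assoc, hJA, Matrix.zero_mul]
    have h3 : J * -Q = 0 := by rw [Matrix.mul_neg, hJQ, neg_zero]
    rw [Matrix.mul_add, h2, zero_add, h3, ← Matrix.mul_assoc] at h1
    exact h1
  have hAM : A * M = A := by
    rw [hM, Matrix.mul_sub, Matrix.mul_one, Matrix.mul_smul, hAJ, smul_zero, sub_zero]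
  have hMA : M * A = A := by
    rw [hM, Matrix.sub_mul, Matrix.one_mul, Matrix.smul_mul, hJA, smul_zero, sub_zero]
  have hP'lyap : Aᵀ * P' + P' * A = -Q := by
    rw [hA.eq, hP']
    have e1 : A * (M * P * M) = A * P * M := by
      rw [← Matrix.mul_assoc, ← Matrix.mul_assoc, hAM]
    have e2 : M * P * M * A = M * (P * A) := by
      rw [Matrix.mul_assoc, hMA, Matrix.mul_assoc]
    rw [e1, e2]
    have : A * P * M + M * (P * A)
        = (A * P + P * A) - c • (A * P * J + J * (P * A)) := by
      rw [hM]
      rw [Matrix.mul_sub, Matrix.sub_mul, Matrix.mul_smul, Matrix.smul_mul,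
        Matrix.mul_one, Matrix.one_mul, smul_add]
      abel
    rw [this, ← Matrix.mul_assoc, hAPJ, hJPA, add_zero, smul_zero, sub_zero, hlyap]
  -- trace comparison
  have htr := hmin P' hP'psd hP'lyap
  set s : ℝ := dotProduct u (P.mulVec u) with hs
  have hsnonneg : 0 ≤ s := by simpa [hs] using hPpsd.dotProduct_mulVec_nonneg u
  have htrJP : (J * P).trace = s := by
    simp only [hJ, hs, hu, trace, Matrix.diag, mul_apply, vecMulVec_apply, dotProduct, mulVec,
      one_mul, mul_one]
    exact (Finset.sum_comm ..)
  have hentry : ∀ i j : Fin n, (J * P * J) i j = s := by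
    intro i j
    simp only [hJ, hs, hu, mul_apply, vecMulVec_apply, dotProduct, mulVec, one_mul, mul_one,
      Finset.sum_mul]
    exact (Finset.sum_comm ..)
  have htrJPJ : (J * P * J).trace = (n:ℝ) * s := by
    have h : (J * P * J).trace = ∑ _i : Fin n, s := by
      unfold Matrix.trace
      exact Finset.sum_congr rfl fun i _ => hentry i i
    rw [h, Finset.sum_const, Finset.card_univ, Fintype.card_fin, nsmul_eq_mul]
  have htrPJ : (P * J).trace = s := by
    rw [Matrix.trace_mul_comm, htrJP]
  have hnne : (n:ℝ) ≠ 0 := Nat.cast_ne_zero.mpr hn.ne'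
  have hP'eq : P' = P - c • (P * J) - c • (J * P) + (c * c) • (J * P * J) := by
    rw [hP', hM]
    simp only [Matrix.sub_mul, Matrix.mul_sub, Matrix.smul_mul, Matrix.mul_smul,
      Matrix.one_mul, Matrix.mul_one, smul_sub, smul_smul, Matrix.mul_assoc]
    abel
  have htrP' : P'.trace = P.trace - c * s := by
    rw [hP'eq, trace_add, trace_sub, trace_sub, trace_smul, trace_smul, trace_smul,
      htrPJ, htrJP, htrJPJ]
    simp only [smul_eq_mul, hc]
    field_simp
    ring
  rw [htrP'] at htr
  have hsle : s ≤ 0 := by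
    have hcpos : 0 < c := by
      rw [hc]; positivity
    nlinarith
  linarith
end

section
/- Let A and Q be symmetric n×n real matrices with A𝟙 = Q𝟙 = 0 and A negative definite on 𝟙⊥. Any symmetric solution P of AᵀP + PA = -Q can be written as P = (p/n)𝟙𝟙ᵀ + P⊥ for some real p and a matrix P⊥ with P⊥𝟙 = 0, and trace(P) = p - (1/2)·trace(Q A†), where A† is the Moore–Penrose pseudoinverse of A. -/
open Matrix

/-- Any symmetric solution `P` of `AᵀP + PA = -Q` decomposes as
`P = (p/n)𝟙𝟙ᵀ + P⊥` with `P⊥𝟙 = 0`, and `trace P = p - (1/2)·trace(Q A†)`,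
where `A†` is the Moore–Penrose pseudoinverse of `A` (characterized by the
four Penrose conditions). -/
theorem lyap_trace_via_pinv {n : ℕ} (hn : 0 < n)
    (A Q P Adag : Matrix (Fin n) (Fin n) ℝ)
    (hA : A.IsSymm) (hQ : Q.IsSymm)
    (hA1 : A.mulVec (fun _ => (1:ℝ)) = 0)
    (hQ1 : Q.mulVec (fun _ => (1:ℝ)) = 0)
    (hAneg : ∀ x : Fin n → ℝ, dotProduct x (fun _ => (1:ℝ)) = 0 → x ≠ 0 →
      dotProduct x (A.mulVec x) < 0)
    (hP : P.IsSymm) (hlyap : Aᵀ * P + P * A = -Q)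
    (hpen1 : A * Adag * A = A) (hpen2 : Adag * A * Adag = Adag)
    (hpen3 : (A * Adag).IsSymm) (hpen4 : (Adag * A).IsSymm) :
    ∃ (p : ℝ) (Pperp : Matrix (Fin n) (Fin n) ℝ),
      P = (p / n) • Matrix.of (fun _ _ => (1:ℝ)) + Pperp ∧
      Pperp.mulVec (fun _ => (1:ℝ)) = 0 ∧
      P.trace = p - (1/2) * (Q * Adag).trace := by
  have hncast : (n:ℝ) ≠ 0 := by positivity
  -- every vector in the kernel of A is constant
  have hker : ∀ x : Fin n → ℝ, A.mulVec x = 0 → x = fun _ => (∑ i, x i) / n := by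
    intro x hx
    set c : ℝ := (∑ i, x i) / n with hc
    set y : Fin n → ℝ := x - fun _ => c with hy
    have hdot : dotProduct y (fun _ => (1:ℝ)) = 0 := by
      simp [dotProduct, hy, Finset.sum_sub_distrib, hc]
      field_simp
      ring
    have hAy : A.mulVec y = 0 := by
      have hyy : y = x - c • (fun _ => (1:ℝ)) := by
        funext i; simp [hy]
      rw [hyy, Matrix.mulVec_sub, Matrix.mulVec_smul, hx, hA1]
      simp
    by_cases hy0 : y = 0
    · funext i
      have := congrFun hy0 i
      simpa [hy, sub_eq_zero] using this
    · exfalso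
      have h := hAneg y hdot hy0
      rw [hAy] at h
      simpa using h
  -- P𝟙 is in the kernel of A
  have hAP1 : A.mulVec (P.mulVec (fun _ => (1:ℝ))) = 0 := by
    have h := congrArg (fun M => M.mulVec (fun _ => (1:ℝ))) hlyap
    simp only [Matrix.add_mulVec, Matrix.neg_mulVec, hQ1, neg_zero,
      ← Matrix.mulVec_mulVec, hA1, hA.eq, Matrix.mulVec_zero, add_zero] at h
    exact h
  set p : ℝ := (∑ i, (P.mulVec (fun _ => (1:ℝ))) i) / n with hp
  have hP1 : P.mulVec (fun _ => (1:ℝ)) = fun _ => p := hker _ hAP1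
  refine ⟨p, P - (p / n) • Matrix.of (fun _ _ => (1:ℝ)), by abel, ?_, ?_⟩
  · rw [Matrix.sub_mulVec, Matrix.smul_mulVec, hP1]
    funext i
    simp [Matrix.mulVec, dotProduct]
    field_simp
    ring
  · -- trace identity
    -- the projector 1 - A·Adag equals (1/n)·J
    have hproj : ∀ M : Matrix (Fin n) (Fin n) ℝ, Mᵀ = M → A * M = 0 →
        M.mulVec (fun _ => (1:ℝ)) = (fun _ => (1:ℝ)) →
        M = (1/(n:ℝ)) • Matrix.of (fun _ _ => (1:ℝ)) := by
      intro M hsymm hAM h1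
      ext i j
      have hcol : A.mulVec (fun k => M k j) = 0 := by
        funext i'
        have := congrFun (congrFun hAM i') j
        simpa [Matrix.mul_apply, Matrix.mulVec, dotProduct] using this
      have hij := congrFun (hker _ hcol) i
      have hsum : ∑ k, M k j = ∑ k, M j k := by
        refine Finset.sum_congr rfl fun k _ => ?_
        simpa using (congrFun (congrFun hsymm k) j).symm
      have hrow : ∑ k, M j k = 1 := by
        have := congrFun h1 j
        simpa [Matrix.mulVec, dotProduct] using this
      rw [hij, hsum, hrow]
      simp
  -- A·Adag·𝟙 = 0
    have hAAdag1 : (A * Adag).mulVec (fun _ => (1:ℝ)) = 0 := by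
      rw [← hpen3.eq, Matrix.transpose_mul, ← Matrix.mulVec_mulVec, hA.eq, hA1]
      simp
    have hAdagA1 : (Adag * A).mulVec (fun _ => (1:ℝ)) = 0 := by
      rw [← Matrix.mulVec_mulVec, hA1]
      simp
    have hM : (1 : Matrix (Fin n) (Fin n) ℝ) - A * Adag
        = (1/(n:ℝ)) • Matrix.of (fun _ _ => (1:ℝ)) := by
      have hMsymm : ((1 : Matrix (Fin n) (Fin n) ℝ) - A * Adag)ᵀ
          = (1 : Matrix (Fin n) (Fin n) ℝ) - A * Adag := by
        simp [Matrix.transpose_sub, hpen3.eq]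
      refine hproj _ hMsymm ?_ ?_
      · have hMA : ((1 : Matrix (Fin n) (Fin n) ℝ) - A * Adag) * A = 0 := by
          rw [Matrix.sub_mul, one_mul, hpen1, sub_self]
        have := congrArg Matrix.transpose hMA
        rwa [Matrix.transpose_mul, Matrix.transpose_zero, hA.eq, hMsymm] at this
      · rw [Matrix.sub_mulVec, hAAdag1, Matrix.one_mulVec, sub_zero]
    have hN : (1 : Matrix (Fin n) (Fin n) ℝ) - Adag * A
        = (1/(n:ℝ)) • Matrix.of (fun _ _ => (1:ℝ)) := by
      refine hproj _ ?_ ?_ ?_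
      · simp [Matrix.transpose_sub, hpen4.eq]
      · rw [Matrix.mul_sub, Matrix.mul_one, ← Matrix.mul_assoc, hpen1, sub_self]
      · rw [Matrix.sub_mulVec, hAdagA1, Matrix.one_mulVec, sub_zero]
    have hcomm : A * Adag = Adag * A := sub_right_injective (hM.trans hN.symm)
    -- trace(P·(1 - A·Adag)) = p
    have htrPM : (P * ((1:Matrix (Fin n) (Fin n) ℝ) - A * Adag)).trace = p := by
      rw [hM, hp]
      simp [Matrix.trace, Matrix.diag, Matrix.mul_apply, Matrix.mulVec,
        dotProduct, Finset.sum_div, Finset.mul_sum]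
      rw [Finset.sum_comm]
      congr 1
      funext i
      congr 1
      funext j
      rw [mul_comm, hP.apply i j]
      ring
    -- 2·trace(P·(A·Adag)) = -trace(Q·Adag)
    have htr2 : 2 * (P * (A * Adag)).trace = -(Q * Adag).trace := by
      have h := congrArg (fun M => (M * Adag).trace) hlyap
      simp only [Matrix.add_mul, Matrix.trace_add, Matrix.neg_mul,
        Matrix.trace_neg, hA.eq] at h
      have e1 : (A * P * Adag).trace = (P * (A * Adag)).trace := by
        rw [Matrix.mul_assoc, Matrix.trace_mul_comm, Matrix.mul_assoc, hcomm]
      have e2 : (P * A * Adag).trace = (P * (A * Adag)).trace := by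
        rw [Matrix.mul_assoc]
      rw [e1, e2] at h
      linarith
    have hsplit : P.trace = (P * (A * Adag)).trace
        + (P * ((1:Matrix (Fin n) (Fin n) ℝ) - A * Adag)).trace := by
      rw [← Matrix.trace_add, ← Matrix.mul_add]
      simp
    rw [hsplit, htrPM]
    linarith
end

section
/- Let A be a symmetric n×n real matrix with A𝟙 = 0 that is negative definite on 𝟙⊥. Then A - 𝟙𝟙ᵀ/n is invertible and A† = (A - 𝟙𝟙ᵀ/n)⁻¹ + 𝟙𝟙ᵀ/n, where A† is the Moore–Penrose pseudoinverse of A. -/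
open Matrix

/-- Uniqueness of the Moore–Penrose pseudoinverse. -/
lemma pinv_unique_aux {n : ℕ} (A X Y : Matrix (Fin n) (Fin n) ℝ)
    (hX1 : A * X * A = A) (hX2 : X * A * X = X)
    (hX3 : (A * X).IsSymm) (hX4 : (X * A).IsSymm)
    (hY1 : A * Y * A = A) (hY2 : Y * A * Y = Y)
    (hY3 : (A * Y).IsSymm) (hY4 : (Y * A).IsSymm) :
    X = Y := by
  have h1 : A * X = A * Y := by
    calc A * X = (A * X)ᵀ := hX3.symm
    _ = Xᵀ * (A * Y * A)ᵀ := by rw [Matrix.transpose_mul, hY1]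
    _ = (A * X)ᵀ * (A * Y)ᵀ := by simp only [Matrix.transpose_mul]; noncomm_ring
    _ = (A * X) * (A * Y) := by rw [hX3, hY3]
    _ = (A * X * A) * Y := by noncomm_ring
    _ = A * Y := by rw [hX1]
  have h2 : X * A = Y * A := by
    calc X * A = (X * A)ᵀ := hX4.symm
    _ = (A * Y * A)ᵀ * Xᵀ := by rw [Matrix.transpose_mul, hY1]
    _ = (Y * A)ᵀ * (X * A)ᵀ := by simp only [Matrix.transpose_mul]; noncomm_ring
    _ = (Y * A) * (X * A) := by rw [hX4, hY4]
    _ = Y * (A * X * A) := by noncomm_ring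
    _ = Y * A := by rw [hX1]
  calc X = X * A * X := hX2.symm
  _ = Y * A * X := by rw [h2]
  _ = Y * (A * X) := by rw [Matrix.mul_assoc]
  _ = Y * (A * Y) := by rw [h1]
  _ = Y * A * Y := by rw [Matrix.mul_assoc]
  _ = Y := hY2

/-- `A - 𝟙𝟙ᵀ/n` is invertible and `A† = (A - 𝟙𝟙ᵀ/n)⁻¹ + 𝟙𝟙ᵀ/n`, where `A†` is
the Moore–Penrose pseudoinverse of `A`. -/
theorem pinv_eq_inv_shift {n : ℕ}
    (A Adag : Matrix (Fin n) (Fin n) ℝ)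
    (hA : A.IsSymm)
    (hA1 : A.mulVec (fun _ => (1:ℝ)) = 0)
    (hAneg : ∀ x : Fin n → ℝ, dotProduct x (fun _ => (1:ℝ)) = 0 → x ≠ 0 →
      dotProduct x (A.mulVec x) < 0)
    (hpen1 : A * Adag * A = A) (hpen2 : Adag * A * Adag = Adag)
    (hpen3 : (A * Adag).IsSymm) (hpen4 : (Adag * A).IsSymm) :
    IsUnit (A - (n:ℝ)⁻¹ • Matrix.of (fun _ _ => (1:ℝ))) ∧
    Adag = (A - (n:ℝ)⁻¹ • Matrix.of (fun _ _ => (1:ℝ)))⁻¹ +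
      (n:ℝ)⁻¹ • Matrix.of (fun _ _ => (1:ℝ)) := by
  set J : Matrix (Fin n) (Fin n) ℝ := (n:ℝ)⁻¹ • Matrix.of (fun _ _ => (1:ℝ)) with hJdef
  set B : Matrix (Fin n) (Fin n) ℝ := A - J with hBdef
  -- row sums of A are zero
  have hrow : ∀ i, ∑ k, A i k = 0 := by
    intro i
    have := congrFun hA1 i
    simpa [Matrix.mulVec, dotProduct] using this
  -- column sums of A are zero
  have hcol : ∀ j, ∑ k, A k j = 0 := by
    intro j
    have : ∑ k, A k j = ∑ k, A j k := by
      apply Finset.sum_congr rfl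
      intro k _
      exact (hA.apply k j).symm ▸ rfl
    rw [this]; exact hrow j
  have hAJ : A * J = 0 := by
    ext i j
    simp only [Matrix.mul_apply, hJdef, Matrix.smul_apply, Matrix.of_apply,
      smul_eq_mul, mul_one, Matrix.zero_apply]
    rw [← Finset.sum_mul, hrow i, zero_mul]
  have hJA : J * A = 0 := by
    ext i j
    simp only [Matrix.mul_apply, hJdef, Matrix.smul_apply, Matrix.of_apply,
      smul_eq_mul, one_mul, Matrix.zero_apply]
    rw [← Finset.mul_sum, hcol j, mul_zero]
  have hJJ : J * J = J := by
    ext i j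
    simp only [Matrix.mul_apply, hJdef, Matrix.smul_apply, Matrix.of_apply,
      smul_eq_mul, mul_one]
    rw [Finset.sum_const, Finset.card_univ, Fintype.card_fin, nsmul_eq_mul]
    rcases Nat.eq_zero_or_pos n with h0 | hpos
    · exact absurd j.2 (by omega)
    · field_simp
  -- B is injective on vectors
  have hBinj : ∀ v : Fin n → ℝ, B.mulVec v = 0 → v = 0 := by
    intro v hv
    by_contra hv0
    have hnpos : 0 < n := by
      rcases Nat.eq_zero_or_pos n with h0 | h; swap; · exact h
      exact (hv0 (funext fun i => absurd i.2 (by omega))).elim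
    set s : ℝ := ∑ k, v k with hs
    have hAv : ∀ i, (A.mulVec v) i = (n:ℝ)⁻¹ * s := by
      intro i
      have h := congrFun hv i
      rw [hBdef, Matrix.sub_mulVec] at h
      have hJv : (J.mulVec v) i = (n:ℝ)⁻¹ * s := by
        simp only [hJdef, Matrix.mulVec, dotProduct, Matrix.smul_apply,
          Matrix.of_apply, smul_eq_mul, one_mul]
        rw [hs, Finset.mul_sum]
        exact Finset.sum_congr rfl (fun x _ => by ring)
      have : (A.mulVec v) i - (J.mulVec v) i = 0 := h
      rw [hJv] at this
      linarith
    have hsum : ∑ i, (A.mulVec v) i = 0 := by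
      simp only [Matrix.mulVec, dotProduct]
      rw [Finset.sum_comm]
      apply Finset.sum_eq_zero
      intro k _
      rw [← Finset.sum_mul, hcol k, zero_mul]
    have hs0 : s = 0 := by
      have h2 : ∑ i, (A.mulVec v) i = (n : ℝ) * ((n:ℝ)⁻¹ * s) := by
        rw [Finset.sum_congr rfl (fun i _ => hAv i), Finset.sum_const,
          Finset.card_univ, Fintype.card_fin, nsmul_eq_mul]
      rw [hsum] at h2
      have hn : (n:ℝ) ≠ 0 := Nat.cast_ne_zero.mpr hnpos.ne'
      field_simp at h2
      tauto
    have hAv0 : A.mulVec v = 0 := by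
      funext i
      rw [hAv i, hs0, mul_zero]; rfl
    have hd : dotProduct v (fun _ => (1:ℝ)) = 0 := by
      simp only [dotProduct, mul_one]
      exact hs0
    have := hAneg v hd hv0
    rw [hAv0] at this
    simp [dotProduct] at this
  have hdet : IsUnit B.det := by
    rw [isUnit_iff_ne_zero]
    intro h
    obtain ⟨v, hv0, hv⟩ := Matrix.exists_mulVec_eq_zero_iff.mpr h
    exact hv0 (hBinj v hv)
  have hBunit : IsUnit B := (Matrix.isUnit_iff_isUnit_det B).mpr hdet
  have hBB : B * B⁻¹ = 1 := Matrix.mul_nonsing_inv B hdet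
  have hBB' : B⁻¹ * B = 1 := Matrix.nonsing_inv_mul B hdet
  have hBJ : B * J = -J := by rw [hBdef, Matrix.sub_mul, hAJ, hJJ]; abel
  have hJB : J * B = -J := by rw [hBdef, Matrix.mul_sub, hJA, hJJ]; abel
  have hJBi : J * B⁻¹ = -J := by
    have h : J * B * B⁻¹ = -J * B⁻¹ := by rw [hJB]
    rw [Matrix.mul_assoc, hBB, Matrix.mul_one, Matrix.neg_mul] at h
    simpa using (congrArg Neg.neg h).symm
  have hBiJ : B⁻¹ * J = -J := by
    have h : B⁻¹ * (B * J) = B⁻¹ * -J := by rw [hBJ]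
    rw [← Matrix.mul_assoc, hBB', Matrix.one_mul, Matrix.mul_neg] at h
    simpa using (congrArg Neg.neg h).symm
  set C : Matrix (Fin n) (Fin n) ℝ := B⁻¹ + J with hCdef
  have hABJ : A = B + J := by rw [hBdef]; abel
  have hAC : A * C = 1 - J := by
    rw [hCdef, hABJ, Matrix.add_mul, Matrix.mul_add, Matrix.mul_add,
      hBB, hBJ, hJBi, hJJ]
    abel
  have hCA : C * A = 1 - J := by
    rw [hCdef, hABJ, Matrix.mul_add, Matrix.add_mul, Matrix.add_mul,
      hBB', hJB, hBiJ, hJJ]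
    abel
  have hCJ : C * J = 0 := by rw [hCdef, Matrix.add_mul, hBiJ, hJJ]; abel
  have hJC : J * C = 0 := by rw [hCdef, Matrix.mul_add, hJBi, hJJ]; abel
  have hJsymm : Jᵀ = J := by
    ext i j; simp [hJdef]
  have hC1 : A * C * A = A := by rw [hAC, Matrix.sub_mul, Matrix.one_mul, hJA]; abel
  have hC2 : C * A * C = C := by rw [hCA, Matrix.sub_mul, Matrix.one_mul, hJC]; abel
  have hC3 : (A * C).IsSymm := by
    rw [hAC, Matrix.IsSymm, Matrix.transpose_sub, Matrix.transpose_one, hJsymm]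
  have hC4 : (C * A).IsSymm := by
    rw [hCA, Matrix.IsSymm, Matrix.transpose_sub, Matrix.transpose_one, hJsymm]
  exact ⟨hBunit, pinv_unique_aux A Adag C hpen1 hpen2 hpen3 hpen4 hC1 hC2 hC3 hC4⟩
end

section
/- Let r > 0 and Q₂ a symmetric n×n matrix with Q₂𝟙 = 0, positive definite on 𝟙⊥. The function J(K) = (1/2)trace(Q₂(K + 𝟙𝟙ᵀ/n)⁻¹ + rK) over symmetric K with K𝟙 = 0 and K positive definite on 𝟙⊥ has gradient ∇J(K) = -(1/2)(K + 𝟙𝟙ᵀ/n)⁻¹Q₂(K + 𝟙𝟙ᵀ/n)⁻¹ + (r/2)(I - 𝟙𝟙ᵀ/n), and ∇J(K) = 0 holds if and only if K = Q₂^{1/2}/√r, where Q₂^{1/2} is the positive semidefinite square root of Q₂. -/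
open Matrix

open scoped ComplexOrder in
/-- The positive semidefinite square root of a positive semidefinite matrix
(removed from Mathlib; restored here with its old definition). -/
noncomputable def Matrix.PosSemidef.sqrt {n : Type*} [Fintype n] [DecidableEq n] {R : Type*} [RCLike R]
    {A : Matrix n n R} (hA : Matrix.PosSemidef A) : Matrix n n R :=
  hA.1.eigenvectorUnitary.1 * diagonal ((↑) ∘ (√·) ∘ hA.1.eigenvalues) *
    (star hA.1.eigenvectorUnitary : Matrix n n R)

open scoped MatrixOrder in
private lemma aux_sqrt_eq_cfc {n : ℕ} {A : Matrix (Fin n) (Fin n) ℝ} (hA : A.PosSemidef) :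
    hA.sqrt = CFC.sqrt A := by
  rw [CFC.sqrt_eq_cfc, cfc_nnreal_eq_real _ A hA.nonneg, hA.1.cfc_eq]
  rw [IsHermitian.cfc, Unitary.conjStarAlgAut_apply]
  unfold Matrix.PosSemidef.sqrt
  congr 3
  simp only [Real.sqrt.eq_1]

open scoped MatrixOrder in
lemma Matrix.PosSemidef.posSemidef_sqrt {n : ℕ} {A : Matrix (Fin n) (Fin n) ℝ}
    (hA : A.PosSemidef) : hA.sqrt.PosSemidef := by
  rw [aux_sqrt_eq_cfc hA]
  exact (CFC.sqrt_nonneg A).posSemidef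

open scoped MatrixOrder in
lemma Matrix.PosSemidef.sqrt_mul_self {n : ℕ} {A : Matrix (Fin n) (Fin n) ℝ}
    (hA : A.PosSemidef) : hA.sqrt * hA.sqrt = A := by
  rw [aux_sqrt_eq_cfc hA]
  exact CFC.sqrt_mul_sqrt_self A hA.nonneg

open scoped MatrixOrder in
lemma Matrix.PosSemidef.eq_sqrt_of_sq_eq {n : ℕ} {A B : Matrix (Fin n) (Fin n) ℝ}
    (hB : B.PosSemidef) (hA : A.PosSemidef) (h : B ^ 2 = A) : B = hA.sqrt := by
  rw [aux_sqrt_eq_cfc hA]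
  exact (CFC.sqrt_unique (by rw [← sq]; exact h) hB.nonneg).symm

attribute [local instance] Matrix.linftyOpNormedRing Matrix.linftyOpNormedAlgebra

private lemma aux_isSymm_of_isHermitian {n : ℕ} {A : Matrix (Fin n) (Fin n) ℝ}
    (h : A.IsHermitian) : A.IsSymm := by
  ext i j
  have := congrFun (congrFun h i) j
  simpa [Matrix.conjTranspose_apply] using this

private lemma aux_isHermitian_of_isSymm {n : ℕ} {A : Matrix (Fin n) (Fin n) ℝ}
    (h : A.IsSymm) : A.IsHermitian := by
  ext i j
  have := congrFun (congrFun h i) j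
  simpa [Matrix.conjTranspose_apply] using this

private lemma aux_vecMul_symm {n : ℕ} {A : Matrix (Fin n) (Fin n) ℝ} (h : A.IsSymm)
    (v : Fin n → ℝ) : v ᵥ* A = A *ᵥ v := by
  rw [← Matrix.mulVec_transpose, h]

private lemma aux_mul_M {n : ℕ} {K : Matrix (Fin n) (Fin n) ℝ}
    (hK1 : K *ᵥ (fun _ => (1:ℝ)) = 0) :
    K * ((n:ℝ)⁻¹ • Matrix.of (fun _ _ => (1:ℝ))) = 0 := by
  ext i j
  have h0 : ∑ k, K i k = 0 := by
    have := congrFun hK1 i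
    simpa [Matrix.mulVec, dotProduct] using this
  simp [Matrix.mul_apply, ← Finset.sum_mul, h0]

private lemma aux_M_mul {n : ℕ} {K : Matrix (Fin n) (Fin n) ℝ} (hKs : K.IsSymm)
    (hK1 : K *ᵥ (fun _ => (1:ℝ)) = 0) :
    ((n:ℝ)⁻¹ • Matrix.of (fun _ _ => (1:ℝ))) * K = 0 := by
  have hMT : ((n:ℝ)⁻¹ • Matrix.of (fun _ _ => (1:ℝ)) : Matrix (Fin n) (Fin n) ℝ)ᵀ
      = (n:ℝ)⁻¹ • Matrix.of (fun _ _ => (1:ℝ)) := by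
    ext i j; simp
  have h := congrArg Matrix.transpose (aux_mul_M hK1)
  rw [Matrix.transpose_mul, hMT, hKs] at h
  simpa using h

private lemma aux_M_mul_M {n : ℕ} :
    ((n:ℝ)⁻¹ • Matrix.of (fun _ _ => (1:ℝ)) : Matrix (Fin n) (Fin n) ℝ) *
      ((n:ℝ)⁻¹ • Matrix.of (fun _ _ => (1:ℝ))) = (n:ℝ)⁻¹ • Matrix.of (fun _ _ => (1:ℝ)) := by
  ext i j
  have hn : (n:ℝ) ≠ 0 := by
    have : 0 < n := i.pos
    exact_mod_cast this.ne'
  simp [Matrix.mul_apply, Finset.sum_const, Finset.card_univ]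
  field_simp

private lemma aux_quad_shift {n : ℕ} {K : Matrix (Fin n) (Fin n) ℝ} (hKs : K.IsSymm)
    (hK1 : K *ᵥ (fun _ => (1:ℝ)) = 0) (x : Fin n → ℝ) (c : ℝ) :
    (x - c • (fun _ => (1:ℝ))) ⬝ᵥ K *ᵥ (x - c • (fun _ => (1:ℝ))) = x ⬝ᵥ K *ᵥ x := by
  have hvm : (fun _ => (1:ℝ)) ⬝ᵥ K *ᵥ x = 0 := by
    rw [Matrix.dotProduct_mulVec, aux_vecMul_symm hKs, hK1, zero_dotProduct]
  rw [Matrix.mulVec_sub, Matrix.mulVec_smul, hK1, smul_zero, sub_zero,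
    sub_dotProduct, smul_dotProduct, hvm, smul_zero, sub_zero]

private lemma aux_K_psd {n : ℕ} {K : Matrix (Fin n) (Fin n) ℝ} (hKs : K.IsSymm)
    (hK1 : K *ᵥ (fun _ => (1:ℝ)) = 0)
    (hKpos : ∀ x : Fin n → ℝ, dotProduct x (fun _ => (1:ℝ)) = 0 → x ≠ 0 →
      0 < dotProduct x (K.mulVec x)) : K.PosSemidef := by
  refine Matrix.PosSemidef.of_dotProduct_mulVec_nonneg (aux_isHermitian_of_isSymm hKs) fun x => ?_
  rw [star_trivial]
  rcases Nat.eq_zero_or_pos n with hn | hn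
  · subst hn
    have hx0 : x = 0 := Subsingleton.elim x 0
    subst hx0
    rw [zero_dotProduct]
  have hnR : (n:ℝ) ≠ 0 := by exact_mod_cast hn.ne'
  set c : ℝ := (∑ i, x i) / n with hc
  set y : Fin n → ℝ := x - c • (fun _ => (1:ℝ)) with hy
  have hyu : y ⬝ᵥ (fun _ => (1:ℝ)) = 0 := by
    simp only [hy, sub_dotProduct, smul_dotProduct, smul_eq_mul]
    have h1 : x ⬝ᵥ (fun _ => (1:ℝ)) = ∑ i, x i := by simp [dotProduct]
    have h2 : ((fun _ => (1:ℝ)) : Fin n → ℝ) ⬝ᵥ (fun _ => (1:ℝ)) = (n:ℝ) := by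
      simp [dotProduct]
    rw [h1, h2, hc]
    field_simp
    ring
  have hq := aux_quad_shift hKs hK1 x c
  rcases eq_or_ne y 0 with h0 | h0
  · rw [← hq, hy] at *
    rw [h0]
    simp
  · rw [← hq]
    exact (hKpos y hyu h0).le

private lemma aux_KM_posdef {n : ℕ} {K : Matrix (Fin n) (Fin n) ℝ} (hKs : K.IsSymm)
    (hK1 : K *ᵥ (fun _ => (1:ℝ)) = 0)
    (hKpos : ∀ x : Fin n → ℝ, dotProduct x (fun _ => (1:ℝ)) = 0 → x ≠ 0 →
      0 < dotProduct x (K.mulVec x)) :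
    (K + (n:ℝ)⁻¹ • Matrix.of (fun _ _ => (1:ℝ))).PosDef := by
  have hpsd := aux_K_psd hKs hK1 hKpos
  refine Matrix.PosDef.of_dotProduct_mulVec_pos ?_ ?_
  · refine Matrix.IsHermitian.add (aux_isHermitian_of_isSymm hKs) ?_
    refine aux_isHermitian_of_isSymm ?_
    ext i j; simp
  · intro x hx
    rw [star_trivial]
    have hn : 0 < n := by
      rcases Nat.eq_zero_or_pos n with h | h
      · subst h; exact absurd (Subsingleton.elim x 0) hx
      · exact h
    have hnR : (0:ℝ) < n := by exact_mod_cast hn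
    have hMx : x ⬝ᵥ ((n:ℝ)⁻¹ • Matrix.of (fun _ _ => (1:ℝ)) : Matrix (Fin n) (Fin n) ℝ) *ᵥ x
        = (n:ℝ)⁻¹ * ((∑ i, x i) * (∑ i, x i)) := by
      have h1 : ∀ i, (((n:ℝ)⁻¹ • Matrix.of (fun _ _ => (1:ℝ)) : Matrix (Fin n) (Fin n) ℝ) *ᵥ x) i
          = (n:ℝ)⁻¹ * ∑ j, x j := by
        intro i
        simp [Matrix.mulVec, dotProduct, Finset.mul_sum]
      rw [dotProduct]
      simp_rw [h1]
      rw [← Finset.sum_mul]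
      ring
    rw [Matrix.add_mulVec, dotProduct_add, hMx]
    rcases eq_or_ne (∑ i, x i) 0 with hs | hs
    · have hxu : x ⬝ᵥ (fun _ => (1:ℝ)) = 0 := by simpa [dotProduct] using hs
      have := hKpos x hxu hx
      rw [hs]
      simpa using this
    · have h1 : 0 ≤ x ⬝ᵥ K *ᵥ x := by simpa using hpsd.dotProduct_mulVec_nonneg x
      have h2 : 0 < (n:ℝ)⁻¹ * ((∑ i, x i) * (∑ i, x i)) :=
        mul_pos (inv_pos.mpr hnR) (mul_self_pos.mpr hs)
      linarith

private lemma aux_sandwich {n : ℕ} {K M : Matrix (Fin n) (Fin n) ℝ}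
    (hKM : K * M = 0) (hMM : M * M = M) :
    (K + M) * (1 - M) * (K + M) = K * K := by
  have h1 : (K + M) * (1 - M) = K := by
    rw [mul_sub, mul_one, add_mul, hKM, hMM]
    abel
  rw [h1, mul_add, hKM, add_zero]

private lemma aux_sqrt_mulVec_one {n : ℕ} {Q₂ : Matrix (Fin n) (Fin n) ℝ}
    (hQpsd : Q₂.PosSemidef) (hQ1 : Q₂ *ᵥ (fun _ => (1:ℝ)) = 0) :
    hQpsd.sqrt *ᵥ (fun _ => (1:ℝ)) = 0 := by
  have hBs : hQpsd.sqrt.IsSymm := aux_isSymm_of_isHermitian hQpsd.posSemidef_sqrt.1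
  have key : (hQpsd.sqrt *ᵥ (fun _ => (1:ℝ))) ⬝ᵥ (hQpsd.sqrt *ᵥ (fun _ => (1:ℝ))) = 0 := by
    rw [Matrix.dotProduct_mulVec, aux_vecMul_symm hBs, Matrix.mulVec_mulVec,
      hQpsd.sqrt_mul_self, hQ1, zero_dotProduct]
  exact dotProduct_self_eq_zero.mp key

/-- The gradient of `J(K) = (1/2)trace(Q₂(K + 𝟙𝟙ᵀ/n)⁻¹ + rK)` over symmetric `K`
with `K𝟙 = 0`, positive definite on `𝟙⊥`, is
`∇J(K) = -(1/2)(K + 𝟙𝟙ᵀ/n)⁻¹Q₂(K + 𝟙𝟙ᵀ/n)⁻¹ + (r/2)(I - 𝟙𝟙ᵀ/n)`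
(in the sense that the directional derivative of `J` at `K` along any admissible
direction `H` equals `trace(∇J(K)·H)`), and `∇J(K) = 0` iff `K = Q₂^{1/2}/√r`. -/
theorem gradient_and_optimality {n : ℕ}
    (Q₂ : Matrix (Fin n) (Fin n) ℝ)
    (hQpsd : Q₂.PosSemidef)
    (hQ1 : Q₂.mulVec (fun _ => (1:ℝ)) = 0)
    (hQpos : ∀ x : Fin n → ℝ, dotProduct x (fun _ => (1:ℝ)) = 0 → x ≠ 0 →
      0 < dotProduct x (Q₂.mulVec x))
    (r : ℝ) (hr : 0 < r) :
    let M : Matrix (Fin n) (Fin n) ℝ := (n:ℝ)⁻¹ • Matrix.of (fun _ _ => (1:ℝ))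
    let J : Matrix (Fin n) (Fin n) ℝ → ℝ :=
      fun K => (1/2) * ((Q₂ * (K + M)⁻¹).trace + r * K.trace)
    let gradJ : Matrix (Fin n) (Fin n) ℝ → Matrix (Fin n) (Fin n) ℝ :=
      fun K => (-(1/2 : ℝ)) • ((K + M)⁻¹ * Q₂ * (K + M)⁻¹) +
        (r/2) • ((1 : Matrix (Fin n) (Fin n) ℝ) - M)
    ∀ K : Matrix (Fin n) (Fin n) ℝ, K.IsSymm → K.mulVec (fun _ => (1:ℝ)) = 0 →
      (∀ x : Fin n → ℝ, dotProduct x (fun _ => (1:ℝ)) = 0 → x ≠ 0 →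
        0 < dotProduct x (K.mulVec x)) →
      (∀ H : Matrix (Fin n) (Fin n) ℝ, H.IsSymm → H.mulVec (fun _ => (1:ℝ)) = 0 →
        HasDerivAt (fun t : ℝ => J (K + t • H)) ((gradJ K * H).trace) 0) ∧
      (gradJ K = 0 ↔ K = (Real.sqrt r)⁻¹ • hQpsd.sqrt) := by
  intro M J gradJ K hKs hK1 hKpos
  have hMdef : M = (n:ℝ)⁻¹ • Matrix.of (fun _ _ => (1:ℝ)) := rfl
  have hJdef : ∀ X, J X = (1/2) * ((Q₂ * (X + M)⁻¹).trace + r * X.trace) := fun _ => rfl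
  have hgdef : ∀ X, gradJ X = (-(1/2 : ℝ)) • ((X + M)⁻¹ * Q₂ * (X + M)⁻¹) +
      (r/2) • ((1 : Matrix (Fin n) (Fin n) ℝ) - M) := fun _ => rfl
  have hKM : K * M = 0 := by rw [hMdef]; exact aux_mul_M hK1
  have hMM : M * M = M := by rw [hMdef]; exact aux_M_mul_M
  have hApos : (K + M).PosDef := by rw [hMdef]; exact aux_KM_posdef hKs hK1 hKpos
  set A := K + M with hA
  have hAunit : IsUnit A := hApos.isUnit
  have hAdet : IsUnit A.det := (Matrix.isUnit_iff_isUnit_det A).mp hAunit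
  have hAS : A * A⁻¹ = 1 := Matrix.mul_nonsing_inv A hAdet
  have hSA : A⁻¹ * A = 1 := Matrix.nonsing_inv_mul A hAdet
  constructor
  · -- derivative part
    intro H hHs hH1
    have hg : HasDerivAt (fun t : ℝ => A + t • H) H 0 := by
      have h := ((hasDerivAt_id (0:ℝ)).smul_const H).const_add A
      simp only [id, one_smul] at h
      exact h
    have hinv : HasDerivAt (fun t : ℝ => (A + t • H)⁻¹) (-(A⁻¹ * H * A⁻¹)) 0 := by
      have hco : ((hAunit.unit⁻¹ : (Matrix (Fin n) (Fin n) ℝ)ˣ) : Matrix (Fin n) (Fin n) ℝ)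
          = A⁻¹ := by
        rw [Matrix.coe_units_inv, hAunit.unit_spec]
      have hF := hasFDerivAt_ringInverse (𝕜 := ℝ) hAunit.unit
      rw [hAunit.unit_spec] at hF
      have hF' : HasFDerivAt (Ring.inverse : Matrix (Fin n) (Fin n) ℝ → _)
          (-ContinuousLinearMap.mulLeftRight ℝ (Matrix (Fin n) (Fin n) ℝ)
            ↑hAunit.unit⁻¹ ↑hAunit.unit⁻¹)
          (A + (0:ℝ) • H) := by
        have h0 : A + (0:ℝ) • H = A := by simp
        rw [h0]
        exact hF
      have hcomp := hF'.comp_hasDerivAt 0 hg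
      have hcomp' := hcomp.congr_of_eventuallyEq
        (Filter.Eventually.of_forall fun t : ℝ => Matrix.nonsing_inv_eq_ringInverse (A + t • H))
      simp [ContinuousLinearMap.mulLeftRight_apply, hco, mul_assoc] at hcomp' ⊢
      exact hcomp'
    have hφ : HasDerivAt (fun t : ℝ => (Q₂ * (A + t • H)⁻¹).trace)
        ((Q₂ * -(A⁻¹ * H * A⁻¹)).trace) 0 := by
      let φ : Matrix (Fin n) (Fin n) ℝ →ₗ[ℝ] ℝ :=
        (Matrix.traceLinearMap (Fin n) ℝ ℝ).comp (LinearMap.mulLeft ℝ Q₂)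
      have := (LinearMap.toContinuousLinearMap φ).hasFDerivAt.comp_hasDerivAt 0 hinv
      exact this
    have hlin : HasDerivAt (fun t : ℝ => r * (K + t • H).trace) (r * H.trace) 0 := by
      have heq : (fun t : ℝ => r * (K + t • H).trace)
          = fun t : ℝ => r * K.trace + (r * H.trace) * t := by
        funext t
        rw [Matrix.trace_add, Matrix.trace_smul]
        simp
        ring
      rw [heq]
      simpa using ((hasDerivAt_id (0:ℝ)).const_mul (r * H.trace)).const_add (r * K.trace)
    have hsum := (hφ.add hlin).const_mul (1/2 : ℝ)
    have hfun : (fun t : ℝ => (1/2 : ℝ) * ((Q₂ * (A + t • H)⁻¹).trace + r * (K + t • H).trace))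
        = fun t : ℝ => J (K + t • H) := by
      funext t
      rw [hJdef, hA, add_right_comm]
    have hHM : H * M = 0 := by rw [hMdef]; exact aux_mul_M hH1
    have hMH : (M * H).trace = 0 := by
      rw [Matrix.trace_mul_comm, hHM, Matrix.trace_zero]
    have hval : (1/2 : ℝ) * ((Q₂ * -(A⁻¹ * H * A⁻¹)).trace + r * H.trace)
        = (gradJ K * H).trace := by
      have hc : (Q₂ * (A⁻¹ * H * A⁻¹)).trace = ((A⁻¹ * Q₂ * A⁻¹) * H).trace := by
        calc (Q₂ * (A⁻¹ * H * A⁻¹)).trace = ((Q₂ * A⁻¹ * H) * A⁻¹).trace := by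
              rw [mul_assoc, mul_assoc, mul_assoc]
          _ = (A⁻¹ * (Q₂ * A⁻¹ * H)).trace := Matrix.trace_mul_comm _ _
          _ = ((A⁻¹ * Q₂ * A⁻¹) * H).trace := by rw [← mul_assoc, ← mul_assoc]
      rw [hgdef, ← hA, Matrix.add_mul, Matrix.smul_mul, Matrix.smul_mul, Matrix.sub_mul,
        Matrix.one_mul, Matrix.trace_add, Matrix.trace_smul, Matrix.trace_smul,
        Matrix.trace_sub, hMH, mul_neg, Matrix.trace_neg, hc]
      simp only [smul_eq_mul]
      ring
    simp only [Pi.add_apply] at hsum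
    rw [hfun] at hsum
    rwa [hval] at hsum
  · -- optimality part
    have hsand : A * (1 - M) * A = K * K := aux_sandwich hKM hMM
    have hrpos : 0 < Real.sqrt r := Real.sqrt_pos.mpr hr
    have hrne : Real.sqrt r ≠ 0 := hrpos.ne'
    constructor
    · intro h0
      rw [hgdef, ← hA] at h0
      have h1 : A⁻¹ * Q₂ * A⁻¹ = r • (1 - M) := by
        have h3 : (-(1/2):ℝ) • (A⁻¹ * Q₂ * A⁻¹) = -((r/2) • (1 - M)) :=
          eq_neg_of_add_eq_zero_left h0
        have h4 := congrArg (fun X : Matrix (Fin n) (Fin n) ℝ => (-2:ℝ) • X) h3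
        simp only [smul_smul, smul_neg] at h4
        rw [show ((-2:ℝ) * (-(1/2))) = 1 by norm_num, one_smul] at h4
        rw [h4, ← neg_smul]
        congr 1
        ring
      have hQ2 : Q₂ = r • (K * K) := by
        calc Q₂ = (A * A⁻¹) * Q₂ * (A⁻¹ * A) := by rw [hAS, hSA, Matrix.one_mul, Matrix.mul_one]
          _ = A * (A⁻¹ * Q₂ * A⁻¹) * A := by noncomm_ring
          _ = A * (r • (1 - M)) * A := by rw [h1]
          _ = r • (A * (1 - M) * A) := by rw [Matrix.mul_smul, Matrix.smul_mul]
          _ = r • (K * K) := by rw [hsand]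
      have hKpsd : K.PosSemidef := aux_K_psd hKs hK1 hKpos
      have hLpsd : (Real.sqrt r • K).PosSemidef := by
        refine Matrix.PosSemidef.of_dotProduct_mulVec_nonneg ?_ ?_
        · show (Real.sqrt r • K)ᴴ = Real.sqrt r • K
          rw [Matrix.conjTranspose_smul, hKpsd.1]
          simp
        · intro x
          rw [Matrix.smul_mulVec, dotProduct_smul]
          exact smul_nonneg (by positivity) (hKpsd.dotProduct_mulVec_nonneg x)
      have hsq : (Real.sqrt r • K) ^ 2 = Q₂ := by
        rw [sq, Matrix.smul_mul, Matrix.mul_smul, smul_smul, Real.mul_self_sqrt hr.le, ← hQ2]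
      have hfin := hLpsd.eq_sqrt_of_sq_eq hQpsd hsq
      rw [← hfin, smul_smul, inv_mul_cancel₀ hrne, one_smul]
    · intro hKeq
      have hKK : K * K = r⁻¹ • Q₂ := by
        rw [hKeq, Matrix.smul_mul, Matrix.mul_smul, smul_smul, hQpsd.sqrt_mul_self]
        congr 1
        rw [← mul_inv, Real.mul_self_sqrt hr.le]
      have hQ2 : Q₂ = r • (A * (1 - M) * A) := by
        rw [hsand, hKK, smul_smul, mul_inv_cancel₀ hr.ne', one_smul]
      have hS : A⁻¹ * Q₂ * A⁻¹ = r • (1 - M) := by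
        rw [hQ2, Matrix.mul_smul, Matrix.smul_mul]
        congr 1
        calc A⁻¹ * (A * (1 - M) * A) * A⁻¹
            = (A⁻¹ * A) * (1 - M) * (A * A⁻¹) := by noncomm_ring
          _ = 1 - M := by rw [hSA, hAS, Matrix.one_mul, Matrix.mul_one]
      rw [hgdef, ← hA, hS, smul_smul, ← add_smul]
      rw [show (-(1/2:ℝ)) * r + r/2 = 0 from by ring, zero_smul]
end
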